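/- Let ψ : EuclideanSpace ℝ (Fin n) → ℝ be twice continuously differentiable with gradient ∇ψ and Hessian H(η) (the derivative of ∇ψ, a continuous linear map on E), and let F(η) := ψ(η_q) − ψ(η) − ⟪∇ψ(η), η_q − η⟫ be the Bregman divergence to a fixed target η_q. Then for every η one has ∇F(η) = H(η)(η − η_q). Consequently, if H(η) is invertible for all η, a differentiable curve η : ℝ → E satisfies Newton's law η̇(t) = −λ(η(t) − η_q) if and only if it satisfies η̇(t) = −λ · H(η(t))⁻¹ (∇F(η(t))); i.e., Newton's law of cooling is the gradient flow of the Bregman divergence with respect to the Hessian metric of ψ. -/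

import Mathlib

open scoped RealInnerProductSpace
open InnerProductSpace

section Aux

variable {n : ℕ}

private lemma grad_diff {ψ : EuclideanSpace ℝ (Fin n) → ℝ} (hψ : ContDiff ℝ 2 ψ) :
    Differentiable ℝ (gradient ψ) := by
  have h1 : ContDiff ℝ 1 (fderiv ℝ ψ) := hψ.fderiv_right (by norm_num)
  have : gradient ψ = (⇑(toDual ℝ (EuclideanSpace ℝ (Fin n))).symm) ∘ (fderiv ℝ ψ) := rfl
  rw [this]
  exact ((toDual ℝ (EuclideanSpace ℝ (Fin n))).symm.toContinuousLinearEquiv.differentiable).comp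
    (h1.differentiable one_ne_zero)

private lemma hessian_inner {ψ : EuclideanSpace ℝ (Fin n) → ℝ} (hψ : ContDiff ℝ 2 ψ)
    (x v w : EuclideanSpace ℝ (Fin n)) :
    ⟪fderiv ℝ (gradient ψ) x v, w⟫ = fderiv ℝ (fderiv ℝ ψ) x v w := by
  have h1 : ContDiff ℝ 1 (fderiv ℝ ψ) := hψ.fderiv_right (by norm_num)
  have hdx : DifferentiableAt ℝ (fderiv ℝ ψ) x := (h1.differentiable one_ne_zero) x
  have hA : HasFDerivAt (fun y => ⟪w, gradient ψ y⟫_ℝ)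
      ((innerSL ℝ w).comp (fderiv ℝ (gradient ψ) x)) x :=
    (innerSL ℝ w).hasFDerivAt.comp x ((grad_diff hψ) x).hasFDerivAt
  have hB : HasFDerivAt (fun y => (fderiv ℝ ψ y) w)
      ((ContinuousLinearMap.apply ℝ ℝ w).comp (fderiv ℝ (fderiv ℝ ψ) x)) x :=
    (ContinuousLinearMap.apply ℝ ℝ w).hasFDerivAt.comp x hdx.hasFDerivAt
  have heq : (fun y => ⟪w, gradient ψ y⟫_ℝ) = fun y => (fderiv ℝ ψ y) w := by
    funext y
    rw [real_inner_comm, gradient, toDual_symm_apply]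
  rw [heq] at hA
  have huniq := hA.unique hB
  calc ⟪fderiv ℝ (gradient ψ) x v, w⟫_ℝ
      = ((innerSL ℝ w).comp (fderiv ℝ (gradient ψ) x)) v := (real_inner_comm _ _)
    _ = ((ContinuousLinearMap.apply ℝ ℝ w).comp (fderiv ℝ (fderiv ℝ ψ) x)) v := by
        rw [huniq]
    _ = fderiv ℝ (fderiv ℝ ψ) x v w := rfl

private lemma hessian_symm {ψ : EuclideanSpace ℝ (Fin n) → ℝ} (hψ : ContDiff ℝ 2 ψ)
    (x v w : EuclideanSpace ℝ (Fin n)) :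
    ⟪fderiv ℝ (gradient ψ) x v, w⟫ = ⟪fderiv ℝ (gradient ψ) x w, v⟫ := by
  rw [hessian_inner hψ, hessian_inner hψ]
  exact (hψ.contDiffAt.isSymmSndFDerivAt (by simp [minSmoothness_of_isRCLikeNormedField])) v w

private lemma grad_F {ψ : EuclideanSpace ℝ (Fin n) → ℝ} (hψ : ContDiff ℝ 2 ψ)
    (ηq η : EuclideanSpace ℝ (Fin n)) :
    HasGradientAt (fun x => ψ ηq - ψ x - ⟪gradient ψ x, ηq - x⟫)
      (fderiv ℝ (gradient ψ) η (η - ηq)) η := by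
  have hψd : DifferentiableAt ℝ ψ η := (hψ.differentiable (by norm_num)) η
  have hgd : HasFDerivAt (gradient ψ) (fderiv ℝ (gradient ψ) η) η :=
    ((grad_diff hψ) η).hasFDerivAt
  have hsub : HasFDerivAt (fun x : EuclideanSpace ℝ (Fin n) => ηq - x)
      (-(ContinuousLinearMap.id ℝ (EuclideanSpace ℝ (Fin n)))) η :=
    (hasFDerivAt_id η).const_sub ηq
  have hinner := hgd.inner ℝ hsub
  have htot := ((hasFDerivAt_const (ψ ηq) η).sub hψd.hasFDerivAt).sub hinner
  have := (hasFDerivAt_iff_hasGradientAt.mp htot)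
  convert this using 1
  · rfl
  apply ((toDual ℝ (EuclideanSpace ℝ (Fin n))).injective)
  rw [LinearIsometryEquiv.apply_symm_apply]
  ext v
  have hfd : fderiv ℝ ψ η v = ⟪gradient ψ η, v⟫ := by
    rw [gradient, toDual_symm_apply]
  simp only [toDual_apply_apply, ContinuousLinearMap.coe_sub', Pi.sub_apply,
    ContinuousLinearMap.coe_comp', Function.comp_apply, ContinuousLinearMap.prod_apply,
    fderivInnerCLM_apply, ContinuousLinearMap.zero_apply, ContinuousLinearMap.neg_apply,
    ContinuousLinearMap.coe_id', id_eq, hfd, inner_neg_right]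
  rw [hessian_symm hψ η (η - ηq) v]
  simp only [inner_sub_right]
  ring

end Aux

theorem newton_law_is_gradient_flow
    (n : ℕ) (ψ : EuclideanSpace ℝ (Fin n) → ℝ) (hψ : ContDiff ℝ 2 ψ)
    (ηq : EuclideanSpace ℝ (Fin n)) (lam : ℝ) (hlam : 0 < lam)
    (H : EuclideanSpace ℝ (Fin n) →
      EuclideanSpace ℝ (Fin n) →L[ℝ] EuclideanSpace ℝ (Fin n))
    (hH : ∀ η, H η = fderiv ℝ (gradient ψ) η)
    (F : EuclideanSpace ℝ (Fin n) → ℝ)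
    (hF : ∀ η, F η = ψ ηq - ψ η - ⟪gradient ψ η, ηq - η⟫) :
    (∀ η, gradient F η = H η (η - ηq)) ∧
    (∀ Hinv : EuclideanSpace ℝ (Fin n) →
        EuclideanSpace ℝ (Fin n) →L[ℝ] EuclideanSpace ℝ (Fin n),
      (∀ η, (Hinv η).comp (H η) = ContinuousLinearMap.id ℝ _ ∧
            (H η).comp (Hinv η) = ContinuousLinearMap.id ℝ _) →
      ∀ η : ℝ → EuclideanSpace ℝ (Fin n), Differentiable ℝ η →
        ((∀ t, deriv η t = (-lam) • (η t - ηq)) ↔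
          (∀ t, deriv η t = (-lam) • Hinv (η t) (gradient F (η t))))) := by
  have hFfun : F = fun x => ψ ηq - ψ x - ⟪gradient ψ x, ηq - x⟫ := funext hF
  have hgF : ∀ η, gradient F η = H η (η - ηq) := by
    intro η
    rw [hFfun, hH]
    exact (grad_F hψ ηq η).gradient
  refine ⟨hgF, fun Hinv hInv η hη => ?_⟩
  have key : ∀ x, Hinv x (gradient F x) = x - ηq := by
    intro x
    rw [hgF x]
    have := (hInv x).1
    calc Hinv x (H x (x - ηq)) = ((Hinv x).comp (H x)) (x - ηq) := rfl
      _ = x - ηq := by rw [this]; rfl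
  constructor <;> intro h t <;> rw [h t, key (η t)]
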